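/- Let F be a cdf on (0,∞), H(x) = ∫₀^x y^α dF(y). If H is regularly varying at infinity with index θ where 0 ≤ θ < α, then x^α (1 − F(x)) / H(x) → θ/(α − θ) as x → ∞. -/

import Mathlib

open MeasureTheory Real Filter Set


lemma pow_rpow_comm' (x α : ℝ) (hx : 0 ≤ x) (k : ℕ) : (x ^ k) ^ α = (x ^ α) ^ k := by
  rw [← Real.rpow_natCast x k, ← Real.rpow_natCast (x^α) k, ← Real.rpow_mul hx,
    ← Real.rpow_mul hx, mul_comm]

section Aux
variable {α : ℝ} (hα : 0 < α) (ν : Measure ℝ) [IsProbabilityMeasure ν]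
include hα

/-- integrability of x^α on Ioc 0 t -/
lemma aux_intOn (t : ℝ) : IntegrableOn (fun x : ℝ => x ^ α) (Set.Ioc 0 t) ν := by
  apply Measure.integrableOn_of_bounded (M := max 0 t ^ α) (measure_ne_top ν _)
    ((Real.continuous_rpow_const hα.le).aestronglyMeasurable)
  filter_upwards [ae_restrict_mem measurableSet_Ioc] with x hx
  rw [Real.norm_of_nonneg (Real.rpow_nonneg hx.1.le α)]
  exact Real.rpow_le_rpow hx.1.le (hx.2.trans (le_max_right 0 t)) hα.le

lemma aux_H_nonneg (t : ℝ) : 0 ≤ ∫ x in Set.Ioc 0 t, x ^ α ∂ν :=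
  setIntegral_nonneg measurableSet_Ioc fun x hx => Real.rpow_nonneg hx.1.le α

/-- difference formula -/
lemma aux_H_diff {a b : ℝ} (ha : 0 < a) (hab : a ≤ b) :
    (∫ x in Set.Ioc 0 b, x ^ α ∂ν) - (∫ x in Set.Ioc 0 a, x ^ α ∂ν)
      = ∫ x in Set.Ioc a b, x ^ α ∂ν := by
  have h : Set.Ioc 0 a ∪ Set.Ioc a b = Set.Ioc 0 b := Set.Ioc_union_Ioc_eq_Ioc ha.le hab
  rw [← h, setIntegral_union (Set.Ioc_disjoint_Ioc_of_le le_rfl) measurableSet_Ioc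
    (aux_intOn hα ν a) ((aux_intOn hα ν b).mono_set (Set.Ioc_subset_Ioc ha.le le_rfl))]
  ring

lemma aux_lb {a b : ℝ} (ha : 0 < a) (hab : a ≤ b) :
    a ^ α * (ν (Set.Ioc a b)).toReal ≤ ∫ x in Set.Ioc a b, x ^ α ∂ν := by
  have := setIntegral_mono_on (integrableOn_const (measure_ne_top ν _))
    ((aux_intOn hα ν b).mono_set (Set.Ioc_subset_Ioc ha.le le_rfl)) measurableSet_Ioc
    (fun x hx => Real.rpow_le_rpow ha.le hx.1.le hα.le)
  simpa [mul_comm, measureReal_def] using this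
  
lemma aux_ub {a b : ℝ} (ha : 0 < a) (hab : a ≤ b) :
    (∫ x in Set.Ioc a b, x ^ α ∂ν) ≤ b ^ α * (ν (Set.Ioc a b)).toReal := by
  have := setIntegral_mono_on
    ((aux_intOn hα ν b).mono_set (Set.Ioc_subset_Ioc ha.le le_rfl))
    (integrableOn_const (measure_ne_top ν _)) measurableSet_Ioc
    (fun x hx => Real.rpow_le_rpow (ha.trans hx.1).le hx.2 hα.le)
  simpa [mul_comm, measureReal_def] using this

lemma aux_H_mono {a b : ℝ} (ha : 0 ≤ a) (hab : a ≤ b) :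
    (∫ x in Set.Ioc 0 a, x ^ α ∂ν) ≤ ∫ x in Set.Ioc 0 b, x ^ α ∂ν := by
  apply setIntegral_mono_set (aux_intOn hα ν b) ?_
    (HasSubset.Subset.eventuallyLE (Set.Ioc_subset_Ioc le_rfl hab))
  filter_upwards [ae_restrict_mem measurableSet_Ioc] with x hx
  exact Real.rpow_nonneg hx.1.le α

end Aux

section Aux2
variable (ν : Measure ℝ) [IsProbabilityMeasure ν]

lemma aux_exists_pos (hν : ν (Set.Iic 0) = 0) :
    ∃ a b : ℝ, 0 < a ∧ a ≤ b ∧ 0 < (ν (Set.Ioc a b)).toReal := by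
  have hIoi : ν (Set.Ioi 0) = 1 := by
    have := measure_add_measure_compl (μ := ν) (measurableSet_Iic (a := (0:ℝ)))
    rw [hν, zero_add, Set.compl_Iic] at this
    simpa using this
  by_contra h
  push_neg at h
  have hz : ∀ n : ℕ, ν (Set.Ioc (1/(n+1) : ℝ) (n+1)) = 0 := by
    intro n
    have h1 : (0:ℝ) < 1/(n+1) := by positivity
    have h2 : (1/(n+1) : ℝ) ≤ n+1 := by
      rw [div_le_iff₀ (by positivity)]
      nlinarith [Nat.cast_nonneg (α := ℝ) n]
    have := h _ _ h1 h2
    have hfin : ν (Set.Ioc (1/(n+1) : ℝ) (n+1)) ≠ ⊤ := measure_ne_top ν _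
    have h0 : (ν (Set.Ioc (1/(n+1) : ℝ) (n+1))).toReal = 0 :=
      le_antisymm this ENNReal.toReal_nonneg
    exact (ENNReal.toReal_eq_zero_iff _).1 h0 |>.resolve_right hfin
  have hsub : Set.Ioi (0:ℝ) ⊆ ⋃ n : ℕ, Set.Ioc (1/(n+1) : ℝ) (n+1) := by
    intro y hy
    obtain ⟨n, hn⟩ := exists_nat_gt (max (1/y) y)
    refine Set.mem_iUnion.2 ⟨n, ?_, ?_⟩
    · have hy0 : (0:ℝ) < y := hy
      have h1 : 1/y < (n:ℝ) + 1 := (le_max_left _ _).trans_lt (hn.trans (lt_add_one _))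
      rw [div_lt_iff₀ hy0] at h1
      rw [div_lt_iff₀ (by positivity)]
      nlinarith
    · have : y < n + 1 := (le_max_right _ _).trans_lt (hn.trans (lt_add_one _))
      exact this.le
  have : ν (Set.Ioi 0) = 0 :=
    measure_mono_null hsub (measure_iUnion_null hz)
  rw [hIoi] at this
  exact one_ne_zero this

lemma aux_tail_decomp {t x : ℝ} (ht : 0 < t) (hx : 1 < x) :
    Set.Ioi t = ⋃ k : ℕ, Set.Ioc (t * x ^ k) (t * x ^ (k+1)) := by
  ext y
  simp only [Set.mem_Ioi, Set.mem_iUnion, Set.mem_Ioc]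
  constructor
  · intro hy
    have htend : Tendsto (fun k : ℕ => t * x ^ k) atTop atTop :=
      (tendsto_pow_atTop_atTop_of_one_lt hx).const_mul_atTop ht
    obtain ⟨N, hN⟩ := (htend.eventually_ge_atTop y).exists
    have hex : ∃ k, y ≤ t * x ^ (k+1) := ⟨N, hN.trans (by
      have : (x:ℝ) ^ N ≤ x ^ (N+1) := pow_le_pow_right₀ hx.le (Nat.le_succ N)
      nlinarith)⟩
    classical
    refine ⟨Nat.find hex, ?_, Nat.find_spec hex⟩
    rcases Nat.eq_zero_or_pos (Nat.find hex) with h0 | hpos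
    · rw [h0]; simpa using hy
    · obtain ⟨m, hm⟩ : ∃ m, Nat.find hex = m + 1 :=
        ⟨Nat.find hex - 1, by omega⟩
      have hmin := Nat.find_min hex (m := m) (by omega)
      push_neg at hmin
      rw [hm]; exact hmin
  · rintro ⟨k, h1, h2⟩
    have : t ≤ t * x ^ k := le_mul_of_one_le_right ht.le (one_le_pow₀ hx.le)
    linarith

end Aux2

section Aux3
variable (ν : Measure ℝ) [IsProbabilityMeasure ν]

lemma aux_tail_tsum {t x : ℝ} (ht : 0 < t) (hx : 1 < x) :
    (ν (Set.Ioi t)).toReal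
      = ∑' k : ℕ, (ν (Set.Ioc (t * x ^ k) (t * x ^ (k+1)))).toReal := by
  have hmono : Monotone (fun k : ℕ => t * x ^ k) := fun k l hkl =>
    mul_le_mul_of_nonneg_left (pow_le_pow_right₀ hx.le hkl) ht.le
  have hdisj : Pairwise (Function.onFun Disjoint fun k : ℕ =>
      Set.Ioc (t * x ^ k) (t * x ^ (k+1))) := by
    have := hmono.pairwise_disjoint_on_Ioc_succ
    simpa [Order.succ_eq_add_one] using this
  rw [aux_tail_decomp ht hx, measure_iUnion hdisj (fun k => measurableSet_Ioc),
    ENNReal.tsum_toReal_eq (fun k => measure_ne_top ν _)]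

lemma aux_tail_summable {t x : ℝ} (ht : 0 < t) (hx : 1 < x) :
    Summable (fun k : ℕ => (ν (Set.Ioc (t * x ^ k) (t * x ^ (k+1)))).toReal) := by
  have hmono : Monotone (fun k : ℕ => t * x ^ k) := fun k l hkl =>
    mul_le_mul_of_nonneg_left (pow_le_pow_right₀ hx.le hkl) ht.le
  have hdisj : Pairwise (Function.onFun Disjoint fun k : ℕ =>
      Set.Ioc (t * x ^ k) (t * x ^ (k+1))) := by
    have := hmono.pairwise_disjoint_on_Ioc_succ
    simpa [Order.succ_eq_add_one] using this
  apply ENNReal.summable_toReal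
  rw [← measure_iUnion hdisj (fun k => measurableSet_Ioc), ← aux_tail_decomp ht hx]
  exact measure_ne_top ν _

lemma aux_oneF (t : ℝ) :
    1 - (ν (Set.Iic t)).toReal = (ν (Set.Ioi t)).toReal := by
  have h := measure_add_measure_compl (μ := ν) (measurableSet_Iic (a := t))
  rw [Set.compl_Iic, measure_univ] at h
  have := congrArg ENNReal.toReal h
  rw [ENNReal.toReal_add (measure_ne_top ν _) (measure_ne_top ν _)] at this
  simp at this
  linarith

end Aux3


section KEY
variable {α θ : ℝ} (hα : 0 < α) (hθ0 : 0 ≤ θ) (hθα : θ < α)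
  (ν : Measure ℝ) [IsProbabilityMeasure ν] (hν : ν (Set.Iic 0) = 0)
  (F H : ℝ → ℝ)
  (hF : ∀ t, F t = (ν (Set.Iic t)).toReal)
  (hH : ∀ t, H t = ∫ x in Set.Ioc 0 t, x ^ α ∂ν)
  (hRV : ∀ x : ℝ, 0 < x →
      Tendsto (fun t => H (t * x) / H t) atTop (nhds (x ^ θ)))

include hα hθ0 hθα hν hF hH hRV in
lemma aux_key (x : ℝ) (hx : 1 < x) :
    ∃ U : ℝ → ℝ,
      Tendsto U atTop (nhds ((x ^ θ - 1) / (1 - x ^ θ / x ^ α))) ∧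
      ∀ᶠ t in atTop, t ^ α * (1 - F t) / H t ≤ U t ∧
        (x ^ α)⁻¹ * U t ≤ t ^ α * (1 - F t) / H t := by
  have hx0 : (0:ℝ) < x := by linarith
  set b := x ^ α with hbdef
  set c := x ^ θ with hcdef
  have hb1 : 1 < b := Real.one_lt_rpow_iff_of_pos hx0 |>.2 (Or.inl ⟨hx, hα⟩)
  have hb0 : 0 < b := by linarith
  have hc1 : 1 ≤ c := Real.one_le_rpow hx.le hθ0
  have hc0 : 0 < c := by linarith
  have hcb : c < b := Real.rpow_lt_rpow_left_iff hx |>.2 hθα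
  set ρ : ℝ := (c + b)/2 with hρdef
  have hρc : c < ρ := by rw [hρdef]; linarith
  have hρb : ρ < b := by rw [hρdef]; linarith
  have hρ0 : 0 < ρ := by rw [hρdef]; linarith
  -- basic facts about H
  have hHnn : ∀ t, 0 ≤ H t := fun t => by rw [hH]; exact aux_H_nonneg hα ν t
  have hHmono : ∀ {s t : ℝ}, 0 ≤ s → s ≤ t → H s ≤ H t := fun {s t} hs hst => by
    rw [hH, hH]; exact aux_H_mono hα ν hs hst
  obtain ⟨a₀, b₀, ha₀, hab₀, hpos₀⟩ := aux_exists_pos ν hν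
  have hb₀0 : 0 < b₀ := ha₀.trans_le hab₀
  have hHb₀ : 0 < H b₀ := by
    have hd := aux_H_diff hα ν ha₀ hab₀
    have hlb := aux_lb hα ν (a := a₀) (b := b₀) ha₀ hab₀
    have h1 : 0 < a₀ ^ α * (ν (Set.Ioc a₀ b₀)).toReal :=
      mul_pos (Real.rpow_pos_of_pos ha₀ α) hpos₀
    have hHa : 0 ≤ H a₀ := hHnn a₀
    have : H b₀ - H a₀ = ∫ y in Set.Ioc a₀ b₀, y ^ α ∂ν := by rw [hH, hH]; exact hd
    nlinarith [hlb, this]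
  have hHpos : ∀ t, b₀ ≤ t → 0 < H t := fun t h =>
    hHb₀.trans_le (hHmono hb₀0.le h)
  -- geometric domination
  obtain ⟨T₀, hT₀⟩ := eventually_atTop.1 ((hRV x hx0).eventually (eventually_lt_nhds hρc))
  set T : ℝ := max (max T₀ b₀) 1 with hTdef
  have hT1 : (1:ℝ) ≤ T := le_max_right _ _
  have hTb₀ : b₀ ≤ T := le_trans (le_max_right _ _) (le_max_left _ _)
  have hTT₀ : T₀ ≤ T := le_trans (le_max_left _ _) (le_max_left _ _)
  have hxk : ∀ (t : ℝ), T ≤ t → ∀ k : ℕ, T ≤ t * x ^ k := by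
    intro t ht k
    have h1 : (1:ℝ) ≤ x ^ k := one_le_pow₀ hx.le
    have ht0 : (0:ℝ) < t := lt_of_lt_of_le one_pos (hT1.trans ht)
    calc T ≤ t := ht
    _ ≤ t * x ^ k := le_mul_of_one_le_right ht0.le h1
  have hgeom : ∀ t, T ≤ t → ∀ k : ℕ, H (t * x ^ k) ≤ ρ ^ k * H t := by
    intro t ht k
    induction k with
    | zero => simp
    | succ k ih =>
      have hk := hxk t ht k
      have hp := hHpos _ (hTb₀.trans hk)
      have h2 := hT₀ _ (hTT₀.trans hk)
      have hstep : H ((t * x ^ k) * x) ≤ ρ * H (t * x ^ k) := by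
        calc H ((t * x ^ k) * x) = (H ((t * x ^ k) * x) / H (t * x ^ k)) * H (t * x ^ k) := by
              field_simp
        _ ≤ ρ * H (t * x ^ k) := mul_le_mul_of_nonneg_right h2.le hp.le
      have harr : t * x ^ (k+1) = (t * x ^ k) * x := by ring
      rw [harr]
      calc H ((t * x ^ k) * x) ≤ ρ * H (t * x ^ k) := hstep
      _ ≤ ρ * (ρ ^ k * H t) := mul_le_mul_of_nonneg_left ih hρ0.le
      _ = ρ ^ (k+1) * H t := by ring
  have hgeo : Summable (fun k : ℕ => ρ * (ρ/b) ^ k) :=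
    (summable_geometric_of_lt_one (by positivity) ((div_lt_one hb0).2 hρb)).mul_left ρ
  -- the comparison sequence
  set Δ : ℝ → ℕ → ℝ := fun t k => H (t * x ^ (k+1)) - H (t * x ^ k) with hΔdef
  refine ⟨fun t => ∑' k : ℕ, (b⁻¹) ^ k * (Δ t k / H t), ?_, ?_⟩
  · -- Part A : convergence
    have hlim : ∀ k : ℕ, Tendsto (fun t => (b⁻¹) ^ k * (Δ t k / H t)) atTop
        (nhds ((b⁻¹) ^ k * (c ^ (k+1) - c ^ k))) := by
      intro k
      have h1 : Tendsto (fun t => H (t * x ^ (k+1)) / H t) atTop (nhds (c ^ (k+1))) := by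
        have := hRV (x ^ (k+1)) (by positivity)
        rwa [pow_rpow_comm' x θ hx0.le (k+1)] at this
      have h2 : Tendsto (fun t => H (t * x ^ k) / H t) atTop (nhds (c ^ k)) := by
        have := hRV (x ^ k) (by positivity)
        rwa [pow_rpow_comm' x θ hx0.le k] at this
      have := ((h1.sub h2).const_mul ((b⁻¹) ^ k))
      simpa [hΔdef, sub_div] using this
    have hbound : ∀ᶠ t in atTop, ∀ k : ℕ,
        ‖(b⁻¹) ^ k * (Δ t k / H t)‖ ≤ ρ * (ρ/b) ^ k := by
      filter_upwards [eventually_ge_atTop T] with t ht k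
      have ht0 : (0:ℝ) < t := lt_of_lt_of_le one_pos (hT1.trans ht)
      have hp := hHpos t (hTb₀.trans ht)
      have hmk : H (t * x ^ k) ≤ H (t * x ^ (k+1)) :=
        hHmono (by positivity) (by
          have : (x:ℝ) ^ k ≤ x ^ (k+1) := pow_le_pow_right₀ hx.le (Nat.le_succ k)
          nlinarith)
      have hΔnn : 0 ≤ Δ t k := by rw [hΔdef]; simpa using hmk
      have hterm_nn : 0 ≤ (b⁻¹) ^ k * (Δ t k / H t) := by positivity
      rw [Real.norm_of_nonneg hterm_nn]
      have hΔle : Δ t k / H t ≤ ρ ^ (k+1) := by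
        rw [div_le_iff₀ hp]
        have h1 := hgeom t ht (k+1)
        have h2 := hHnn (t * x ^ k)
        rw [hΔdef]
        simp only []
        nlinarith
      calc (b⁻¹) ^ k * (Δ t k / H t) ≤ (b⁻¹) ^ k * ρ ^ (k+1) :=
            mul_le_mul_of_nonneg_left hΔle (by positivity)
      _ = ρ * (ρ/b) ^ k := by rw [div_eq_mul_inv, mul_pow, pow_succ]; ring
    have hconv := tendsto_tsum_of_dominated_convergence hgeo hlim hbound
    have hval : ∑' k : ℕ, (b⁻¹) ^ k * (c ^ (k+1) - c ^ k) = (c - 1) / (1 - c/b) := by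
      have h1 : ∀ k : ℕ, (b⁻¹) ^ k * (c ^ (k+1) - c ^ k) = (c - 1) * (c/b) ^ k := by
        intro k
        rw [div_eq_mul_inv c b, mul_pow, pow_succ]
        ring
      rw [tsum_congr h1, tsum_mul_left,
        tsum_geometric_of_lt_one (by positivity) ((div_lt_one hb0).2 hcb)]
      exact (div_eq_mul_inv _ _).symm
    rw [hval] at hconv
    exact hconv
  · -- Part B : eventual inequalities
    filter_upwards [eventually_ge_atTop T] with t ht
    have ht0 : (0:ℝ) < t := lt_of_lt_of_le one_pos (hT1.trans ht)
    have hp := hHpos t (hTb₀.trans ht)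
    set νk : ℕ → ℝ := fun k => (ν (Set.Ioc (t * x ^ k) (t * x ^ (k+1)))).toReal with hνkdef
    have htail : 1 - F t = ∑' k, νk k := by
      rw [hF, aux_oneF, aux_tail_tsum ν ht0 hx]
    have hν_sum : Summable νk := aux_tail_summable ν ht0 hx
    have hxx : ∀ k : ℕ, 0 < t * x ^ k := fun k => by positivity
    have hxmono : ∀ k : ℕ, t * x ^ k ≤ t * x ^ (k+1) := fun k => by
      have : (x:ℝ) ^ k ≤ x ^ (k+1) := pow_le_pow_right₀ hx.le (Nat.le_succ k)
      nlinarith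
    have hΔint : ∀ k : ℕ, Δ t k = ∫ y in Set.Ioc (t * x ^ k) (t * x ^ (k+1)), y ^ α ∂ν := by
      intro k; rw [hΔdef]; simp only []; rw [hH, hH]
      exact aux_H_diff hα ν (hxx k) (hxmono k)
    have hak : ∀ k : ℕ, (t * x ^ k) ^ α = t ^ α * b ^ k := by
      intro k
      rw [Real.mul_rpow ht0.le (by positivity), hbdef, pow_rpow_comm' x α hx0.le k]
    have hΔnn : ∀ k, 0 ≤ Δ t k := fun k => by
      rw [hΔdef]; simpa using hHmono (le_of_lt (hxx k)) (hxmono k)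
    have hΔle : ∀ k, Δ t k ≤ ρ ^ (k+1) * H t := by
      intro k
      have h1 := hgeom t ht (k+1)
      have h2 := hHnn (t * x ^ k)
      rw [hΔdef]; simp only []; linarith
    have hub_term : ∀ k : ℕ, t ^ α * νk k ≤ (b⁻¹) ^ k * Δ t k := by
      intro k
      have h := aux_lb hα ν (hxx k) (hxmono k)
      rw [← hΔint k, hak k] at h
      have hbk : (0:ℝ) < b ^ k := by positivity
      have := mul_le_mul_of_nonneg_right h (le_of_lt (inv_pos.2 hbk))
      calc t ^ α * νk k = (t ^ α * b ^ k * νk k) * (b ^ k)⁻¹ := by field_simp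
      _ ≤ Δ t k * (b ^ k)⁻¹ := this
      _ = (b⁻¹) ^ k * Δ t k := by rw [inv_pow]; ring
    have hlb_term : ∀ k : ℕ, (b⁻¹) ^ (k+1) * Δ t k ≤ t ^ α * νk k := by
      intro k
      have h := aux_ub hα ν (hxx k) (hxmono k)
      rw [← hΔint k, hak (k+1)] at h
      have hbk : (0:ℝ) < b ^ (k+1) := by positivity
      have := mul_le_mul_of_nonneg_right h (le_of_lt (inv_pos.2 hbk))
      calc (b⁻¹) ^ (k+1) * Δ t k = Δ t k * (b ^ (k+1))⁻¹ := by rw [inv_pow]; ring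
      _ ≤ (t ^ α * b ^ (k+1) * νk k) * (b ^ (k+1))⁻¹ := this
      _ = t ^ α * νk k := by field_simp
    have hsum_ub : Summable (fun k : ℕ => (b⁻¹) ^ k * Δ t k) := by
      apply Summable.of_nonneg_of_le (fun k => mul_nonneg (by positivity) (hΔnn k))
        (fun k => ?_) (hgeo.mul_left (H t))
      calc (b⁻¹) ^ k * Δ t k ≤ (b⁻¹) ^ k * (ρ ^ (k+1) * H t) :=
            mul_le_mul_of_nonneg_left (hΔle k) (by positivity)
      _ = H t * (ρ * (ρ/b) ^ k) := by rw [div_eq_mul_inv, mul_pow, pow_succ]; ring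
    have hsum_lb : Summable (fun k : ℕ => (b⁻¹) ^ (k+1) * Δ t k) :=
      (hsum_ub.mul_left b⁻¹).congr fun k => by rw [pow_succ]; ring
    have hU : (∑' k : ℕ, (b⁻¹) ^ k * (Δ t k / H t))
        = (∑' k : ℕ, (b⁻¹) ^ k * Δ t k) / H t := by
      rw [← tsum_div_const]
      exact tsum_congr fun k => (mul_div_assoc _ _ _).symm
    constructor
    · show t ^ α * (1 - F t) / H t ≤ ∑' k : ℕ, (b⁻¹) ^ k * (Δ t k / H t)
      have h1 : t ^ α * (1 - F t) ≤ ∑' k, (b⁻¹) ^ k * Δ t k := by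
        rw [htail, ← tsum_mul_left]
        exact (hν_sum.mul_left _).tsum_le_tsum hub_term hsum_ub
      rw [hU]
      exact div_le_div_of_nonneg_right h1 hp.le
    · show b⁻¹ * (∑' k : ℕ, (b⁻¹) ^ k * (Δ t k / H t)) ≤ t ^ α * (1 - F t) / H t
      have h2 : ∑' k, (b⁻¹) ^ (k+1) * Δ t k ≤ t ^ α * (1 - F t) := by
        rw [htail, ← tsum_mul_left]
        exact hsum_lb.tsum_le_tsum hlb_term (hν_sum.mul_left _)
      have h3 : (∑' k, (b⁻¹) ^ (k+1) * Δ t k) = b⁻¹ * ∑' k, (b⁻¹) ^ k * Δ t k := by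
        rw [← tsum_mul_left]
        exact tsum_congr fun k => by rw [pow_succ]; ring
      rw [hU, ← mul_div_assoc]
      refine div_le_div_of_nonneg_right ?_ hp.le
      rw [← h3]
      exact h2

end KEY
lemma slope_rpow (p : ℝ) :
    Tendsto (fun x : ℝ => (x ^ p - 1)/(x - 1)) (nhdsWithin 1 (Set.Ioi 1)) (nhds p) := by
  have hd : HasDerivAt (fun y : ℝ => y ^ p) (p * (1:ℝ) ^ (p-1)) 1 :=
    Real.hasDerivAt_rpow_const (Or.inl one_ne_zero)
  have h2 := hasDerivAt_iff_tendsto_slope.1 hd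
  rw [Real.one_rpow, mul_one] at h2
  have h3 : Tendsto (slope (fun y : ℝ => y ^ p) 1) (nhdsWithin 1 (Set.Ioi 1)) (nhds p) :=
    h2.mono_left (nhdsWithin_mono 1 (fun y hy => ne_of_gt hy))
  apply h3.congr
  intro y
  rw [slope_def_field, Real.one_rpow]



/-- If the truncated α-moment function `H` is regularly varying with index
`θ ∈ [0, α)`, then `x^α (1 - F(x))/H(x) → θ/(α - θ)`. -/
theorem tail_ratio_limit_of_RV
    (α θ : ℝ) (hα : 0 < α) (hθ0 : 0 ≤ θ) (hθα : θ < α)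
    (ν : Measure ℝ) [IsProbabilityMeasure ν] (hν : ν (Set.Iic 0) = 0)
    (F H : ℝ → ℝ)
    (hF : ∀ t, F t = (ν (Set.Iic t)).toReal)
    (hH : ∀ t, H t = ∫ x in Set.Ioc 0 t, x ^ α ∂ν)
    (hRV : ∀ x : ℝ, 0 < x →
      Tendsto (fun t => H (t * x) / H t) atTop (nhds (x ^ θ))) :
    Tendsto (fun x => x ^ α * (1 - F x) / H x) atTop (nhds (θ / (α - θ))) := by

  have hαθ : 0 < α - θ := by linarith
  set L := θ / (α - θ) with hLdef
  have hnum := slope_rpow θ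
  have hden : Tendsto (fun x : ℝ => (1 - x ^ (θ - α))/(x - 1))
      (nhdsWithin 1 (Set.Ioi 1)) (nhds (α - θ)) := by
    have h := (slope_rpow (θ - α)).neg
    have : -(θ - α) = α - θ := by ring
    rw [this] at h
    apply h.congr
    intro y
    rw [← neg_div, neg_sub]
  have hφ : Tendsto (fun x : ℝ => (x ^ θ - 1)/(1 - x ^ θ / x ^ α))
      (nhdsWithin 1 (Set.Ioi 1)) (nhds L) := by
    have hq := hnum.div hden (ne_of_gt hαθ)
    apply hq.congr'
    filter_upwards [self_mem_nhdsWithin] with y hy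
    have hy1 : (1:ℝ) < y := hy
    have hy0 : (0:ℝ) < y := by linarith
    have hne : y - 1 ≠ 0 := sub_ne_zero.2 (ne_of_gt hy1)
    have hlt : y ^ (θ - α) < 1 :=
      Real.rpow_lt_one_of_one_lt_of_neg hy1 (by linarith)
    have hbp : (0:ℝ) < 1 - y ^ (θ - α) := by linarith
    simp only [Pi.div_apply]
    rw [div_div_div_cancel_right₀ hne, Real.rpow_sub hy0]
  have hinv : Tendsto (fun x : ℝ => (x ^ α)⁻¹) (nhdsWithin 1 (Set.Ioi 1)) (nhds 1) := by
    have h1 : ContinuousAt (fun x : ℝ => x ^ α) 1 :=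
      (Real.continuous_rpow_const hα.le).continuousAt
    have hc : ContinuousAt (fun x : ℝ => (x ^ α)⁻¹) 1 :=
      h1.inv₀ (by simp [Real.one_rpow])
    have := hc.tendsto.mono_left (nhdsWithin_le_nhds (s := Set.Ioi 1))
    simpa [Real.one_rpow] using this
  have hprod : Tendsto (fun x : ℝ => (x ^ α)⁻¹ * ((x ^ θ - 1)/(1 - x ^ θ / x ^ α)))
      (nhdsWithin 1 (Set.Ioi 1)) (nhds L) := by
    have := hinv.mul hφ
    simpa using this
  rw [Metric.tendsto_nhds]
  intro ε hε
  have hev : ∀ᶠ x in nhdsWithin 1 (Set.Ioi 1),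
      ((x ^ θ - 1)/(1 - x ^ θ / x ^ α) < L + ε/2 ∧
        L - ε/2 < (x ^ α)⁻¹ * ((x ^ θ - 1)/(1 - x ^ θ / x ^ α))) :=
    (hφ.eventually (eventually_lt_nhds (by linarith))).and
      (hprod.eventually (eventually_gt_nhds (by linarith)))
  obtain ⟨x, ⟨hx2, hx3⟩, hx1⟩ := (hev.and self_mem_nhdsWithin).exists
  have hxgt : (1:ℝ) < x := hx1
  obtain ⟨U, hU, hUe⟩ := aux_key hα hθ0 hθα ν hν F H hF hH hRV x hxgt
  have e1 : ∀ᶠ t in atTop, U t < L + ε/2 :=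
    hU.eventually (eventually_lt_nhds hx2)
  have e2 : ∀ᶠ t in atTop, L - ε/2 < (x ^ α)⁻¹ * U t :=
    (hU.const_mul ((x ^ α)⁻¹)).eventually (eventually_gt_nhds hx3)
  filter_upwards [e1, e2, hUe] with t h1 h2 h34
  obtain ⟨h3, h4⟩ := h34
  rw [Real.dist_eq, abs_sub_lt_iff]
  constructor <;> nlinarith [h1, h2, h3, h4, hε]
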